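/- For a positive integer n, (1/2)·C(2n, n) = C(2n-1, n-1); consequently ∑_{k=0}^{n} C(2n, k) = 2^{2n-1} + (1/2)C(2n,n) is even if and only if C(2n-1, n-1) is even, which holds if and only if n is not a power of 2. -/

import Mathlib

open Finset

lemma L1 (n : ℕ) (hn : 0 < n) : (2 * n).choose n = 2 * (2 * n - 1).choose (n - 1) := by
  obtain ⟨m, rfl⟩ : ∃ m, n = m + 1 := ⟨n - 1, by omega⟩
  have h1 : 2 * (m + 1) = (2 * m + 1) + 1 := by ring
  have h2 : 2 * (m + 1) - 1 = 2 * m + 1 := by omega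
  have h3 : m + 1 - 1 = m := by omega
  rw [h1, Nat.add_sub_cancel, h3, Nat.choose_succ_succ]
  have hsym : (2 * m + 1).choose (m + 1) = (2 * m + 1).choose m := by
    have := Nat.choose_symm (show m + 1 ≤ 2 * m + 1 by omega)
    have hd : 2 * m + 1 - (m + 1) = m := by omega
    rw [hd] at this
    exact this.symm
  rw [hsym]; ring

lemma L2 (n : ℕ) (hn : 0 < n) :
    ∑ k ∈ Finset.range (n + 1), (2 * n).choose k
      = 2 ^ (2 * n - 1) + (2 * n - 1).choose (n - 1) := by
  set S := ∑ k ∈ Finset.range (n + 1), (2 * n).choose k with hS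
  have htail : ∑ k ∈ Finset.Ico (n + 1) (2 * n + 1), (2 * n).choose k
      = ∑ k ∈ Finset.range n, (2 * n).choose k := by
    rw [Finset.range_eq_Ico]
    apply Finset.sum_nbij' (fun k => 2 * n - k) (fun k => 2 * n - k)
    · intro a ha; simp only [Finset.mem_Ico] at *; omega
    · intro a ha; simp only [Finset.mem_Ico] at *; omega
    · intro a ha; simp only [Finset.mem_Ico] at ha; omega
    · intro a ha; simp only [Finset.mem_Ico] at ha; omega
    · intro a ha
      simp only [Finset.mem_Ico] at ha
      rw [Nat.choose_symm (by omega)]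
  have htot : S + ∑ k ∈ Finset.Ico (n + 1) (2 * n + 1), (2 * n).choose k = 2 ^ (2 * n) := by
    rw [hS, Finset.range_eq_Ico, Finset.sum_Ico_consecutive _ (by omega) (by omega),
      ← Finset.range_eq_Ico, Nat.sum_range_choose]
  have hsplit : S = (∑ k ∈ Finset.range n, (2 * n).choose k) + (2 * n).choose n :=
    Finset.sum_range_succ _ n
  have key : 2 * S = 2 * (2 ^ (2 * n - 1) + (2 * n - 1).choose (n - 1)) := by
    have h4 : 2 * 2 ^ (2 * n - 1) = 2 ^ (2 * n) := by
      rw [← pow_succ']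
      congr 1
      omega
    rw [htail] at htot
    rw [mul_add, h4, ← L1 n hn]
    omega
  omega

lemma Lstep (n : ℕ) (hn : 0 < n) :
    (2 * n - 1).choose (n - 1) % 2 = (n - 1).choose ((n - 1) / 2) % 2 := by
  haveI : Fact (Nat.Prime 2) := ⟨Nat.prime_two⟩
  have h := @Choose.choose_modEq_choose_mod_mul_choose_div_nat (2 * n - 1) (n - 1) 2 _
  have h1 : (2 * n - 1) % 2 = 1 := by omega
  have h2 : (2 * n - 1) / 2 = n - 1 := by omega
  have h3 : Nat.choose 1 ((n - 1) % 2) = 1 := by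
    rcases Nat.mod_two_eq_zero_or_one (n - 1) with h | h <;> simp [h]
  rw [h1, h2, h3, one_mul] at h
  exact h

lemma Lkey : ∀ n : ℕ, 0 < n → ((2 * n - 1).choose (n - 1) % 2 = 1 ↔ ∃ j, n = 2 ^ j) := by
  intro n
  induction n using Nat.strong_induction_on with
  | _ n ih =>
    intro hn
    rcases eq_or_lt_of_le (show 1 ≤ n from hn) with h1 | h1
    · -- n = 1
      rw [← h1]
      simp only [show 2 * 1 - 1 = 1 from rfl, show 1 - 1 = 0 from rfl, Nat.choose_zero_right]
      exact ⟨fun _ => ⟨0, rfl⟩, fun _ => trivial⟩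
    · -- n ≥ 2
      rw [Lstep n hn]
      rcases Nat.even_or_odd n with he | ho
      · -- n even, n = 2m
        obtain ⟨m, rfl⟩ := he
        have hm : 0 < m := by omega
        have hmlt : m < m + m := by omega
        have e1 : m + m - 1 = 2 * m - 1 := by omega
        have e2 : (m + m - 1) / 2 = m - 1 := by omega
        rw [e2, e1]
        rw [ih m hmlt hm]
        constructor
        · rintro ⟨j, rfl⟩; exact ⟨j + 1, by ring⟩
        · rintro ⟨j, hj⟩
          have hj1 : 0 < j := by
            rcases Nat.eq_zero_or_pos j with h | h
            · subst h; omega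
            · exact h
          refine ⟨j - 1, ?_⟩
          have : 2 ^ j = 2 * 2 ^ (j - 1) := by
            conv_lhs => rw [show j = (j - 1) + 1 by omega]
            rw [pow_succ]; ring
          omega
      · -- n odd, n ≥ 3, n - 1 = 2m with m ≥ 1
        obtain ⟨m, rfl⟩ := ho
        have hm : 0 < m := by omega
        have e1 : 2 * m + 1 - 1 = 2 * m := rfl
        have e2 : (2 * m) / 2 = m := by omega
        rw [e1, e2]
        have heven : (2 * m).choose m % 2 = 0 := by
          rw [L1 m hm]; omega
        rw [heven]
        constructor
        · intro h; omega
        · rintro ⟨j, hj⟩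
          exfalso
          rcases Nat.eq_zero_or_pos j with h | h
          · subst h; omega
          · have : 2 ^ j = 2 * 2 ^ (j - 1) := by
              conv_lhs => rw [show j = (j - 1) + 1 by omega]
              rw [pow_succ]; ring
            omega

theorem stmt14 (n : ℕ) (hn : 0 < n) :
    (2 * n).choose n = 2 * (2 * n - 1).choose (n - 1) ∧
    ∑ k ∈ Finset.range (n + 1), (2 * n).choose k
      = 2 ^ (2 * n - 1) + (2 * n - 1).choose (n - 1) ∧
    (Even (∑ k ∈ Finset.range (n + 1), (2 * n).choose k)
      ↔ Even ((2 * n - 1).choose (n - 1))) ∧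
    (Even (∑ k ∈ Finset.range (n + 1), (2 * n).choose k)
      ↔ ¬ ∃ j : ℕ, n = 2 ^ j) := by
  have h1 := L1 n hn
  have h2 := L2 n hn
  have hpow : Even (2 ^ (2 * n - 1)) := by
    refine (Nat.even_pow).2 ⟨even_two, by omega⟩
  have h3 : Even (∑ k ∈ Finset.range (n + 1), (2 * n).choose k)
      ↔ Even ((2 * n - 1).choose (n - 1)) := by
    rw [h2, Nat.even_add]
    simp [hpow]
  refine ⟨h1, h2, h3, ?_⟩
  rw [h3, Nat.even_iff]
  have hk := Lkey n hn
  constructor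
  · intro h hx
    rw [hk.2 hx] at h
    omega
  · intro h
    rcases Nat.mod_two_eq_zero_or_one ((2 * n - 1).choose (n - 1)) with hh | hh
    · exact hh
    · exact absurd (hk.1 hh) h
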